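/- Let Z be a random variable taking values in a finite set with a distribution symmetric under Z → −Z (more precisely, let Z = Σ_{k} p_k s_k with s_k i.i.d. uniform in {-1,1} and p_k ∈ ℝ fixed). Then for every A ∈ ℝ, B ≥ 0 and x ≥ 0, A·E[tanh(Bx + Z)] ≤ A·tanh(Bx) ≤ A·B·x whenever A ≥ 0. -/

import Mathlib

open Finset Real

lemma tanh_le_self_of_nonneg {t : ℝ} (ht : 0 ≤ t) : Real.tanh t ≤ t := by
  have key : MonotoneOn (fun y : ℝ => y * Real.cosh y - Real.sinh y) (Set.Ici 0) := by
    apply monotoneOn_of_deriv_nonneg (convex_Ici 0)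
    · fun_prop
    · intro y _
      exact (((hasDerivAt_id' y).mul (Real.hasDerivAt_cosh y)).sub
        (Real.hasDerivAt_sinh y)).differentiableAt.differentiableWithinAt
    · intro y hy
      simp only [interior_Ici, Set.mem_Ioi] at hy
      have h := ((hasDerivAt_id' y).mul (Real.hasDerivAt_cosh y)).sub
        (Real.hasDerivAt_sinh y)
      rw [show deriv (fun y : ℝ => y * Real.cosh y - Real.sinh y) y = _ from h.deriv]
      have : 0 ≤ Real.sinh y := Real.sinh_nonneg_iff.mpr hy.le
      nlinarith
  have h0 := key (Set.self_mem_Ici) (Set.mem_Ici.mpr ht) ht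
  simp only [Real.sinh_zero, Real.cosh_zero, zero_mul, sub_zero] at h0
  have hc : 0 < Real.cosh t := Real.cosh_pos t
  rw [Real.tanh_eq_sinh_div_cosh, div_le_iff₀ hc]
  nlinarith [Real.one_le_cosh t]

lemma tanh_add_tanh_sub_le {a : ℝ} (ha : 0 ≤ a) (z : ℝ) :
    Real.tanh (a + z) + Real.tanh (a - z) ≤ 2 * Real.tanh a := by
  have c1 : 0 < Real.cosh (a + z) := Real.cosh_pos _
  have c2 : 0 < Real.cosh (a - z) := Real.cosh_pos _
  have c3 : 0 < Real.cosh a := Real.cosh_pos _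
  rw [Real.tanh_eq_sinh_div_cosh, Real.tanh_eq_sinh_div_cosh, Real.tanh_eq_sinh_div_cosh,
    div_add_div _ _ c1.ne' c2.ne', ← mul_div_assoc,
    div_le_div_iff₀ (mul_pos c1 c2) c3]
  have hs : Real.sinh (a + z) * Real.cosh (a - z) + Real.cosh (a + z) * Real.sinh (a - z)
      = Real.sinh (2 * a) := by
    rw [← Real.sinh_add]; ring_nf
  have hprod : 2 * (Real.cosh (a + z) * Real.cosh (a - z))
      = Real.cosh (2 * a) + Real.cosh (2 * z) := by
    have h1 := Real.cosh_add (a + z) (a - z)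
    have h2 := Real.cosh_sub (a + z) (a - z)
    have e1 : (a + z) + (a - z) = 2 * a := by ring
    have e2 : (a + z) - (a - z) = 2 * z := by ring
    rw [e1] at h1; rw [e2] at h2; linarith
  have hsinh : Real.sinh (2 * a) = 2 * Real.sinh a * Real.cosh a := Real.sinh_two_mul a
  have hcosh : Real.cosh (2 * a) = Real.cosh a ^ 2 + Real.sinh a ^ 2 := Real.cosh_two_mul a
  have hpyth : Real.cosh a ^ 2 - Real.sinh a ^ 2 = 1 := Real.cosh_sq_sub_sinh_sq a
  have hz1 : 1 ≤ Real.cosh (2 * z) := Real.one_le_cosh _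
  have hsa : 0 ≤ Real.sinh a := Real.sinh_nonneg_iff.mpr ha
  nlinarith [mul_pos c1 c2]

/-- For a symmetric random variable `Z = Σ_k p_k s_k` with i.i.d. uniform signs `s`,
`A ≥ 0`, `B ≥ 0`, `x ≥ 0`:  `A·E[tanh(Bx + Z)] ≤ A·tanh(Bx) ≤ A·B·x`. -/
theorem tanh_symmetric_noise_bound
    (K : ℕ) (p : Fin K → ℝ) (A B x : ℝ) (hA : 0 ≤ A) (hB : 0 ≤ B) (hx : 0 ≤ x) :
    A * ((1 / (2:ℝ) ^ K) * ∑ s : Fin K → Bool,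
        Real.tanh (B * x + ∑ k : Fin K, p k * (if s k then (1:ℝ) else -1)))
      ≤ A * Real.tanh (B * x)
    ∧ A * Real.tanh (B * x) ≤ A * B * x := by
  set a := B * x with ha_def
  have ha : 0 ≤ a := mul_nonneg hB hx
  set Z : (Fin K → Bool) → ℝ := fun s => ∑ k : Fin K, p k * (if s k then (1:ℝ) else -1)
    with hZ_def
  have hZneg : ∀ s, Z (fun k => !(s k)) = -Z s := by
    intro s
    rw [hZ_def]
    simp only
    rw [← Finset.sum_neg_distrib]
    refine Finset.sum_congr rfl fun k _ => ?_
    by_cases hsk : s k = true <;> simp [hsk]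
  let e : Equiv.Perm (Fin K → Bool) :=
    ⟨fun s k => !(s k), fun s k => !(s k),
      fun s => by funext k; simp, fun s => by funext k; simp⟩
  have hflip : ∑ s : Fin K → Bool, Real.tanh (a + Z s)
      = ∑ s : Fin K → Bool, Real.tanh (a - Z s) := by
    have h := Equiv.sum_comp e (fun s => Real.tanh (a - Z s))
    rw [← h]
    refine Finset.sum_congr rfl fun s _ => ?_
    have : Z (e s) = -Z s := hZneg s
    rw [show (e s : Fin K → Bool) = fun k => !(s k) from rfl, hZneg s]
    ring_nf
  have hsum : ∑ s : Fin K → Bool, Real.tanh (a + Z s) ≤ (2:ℝ)^K * Real.tanh a := by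
    have h2 : (∑ s : Fin K → Bool, Real.tanh (a + Z s))
        + (∑ s : Fin K → Bool, Real.tanh (a + Z s))
        = ∑ s : Fin K → Bool, (Real.tanh (a + Z s) + Real.tanh (a - Z s)) := by
      nth_rewrite 2 [hflip]
      exact Finset.sum_add_distrib.symm
    have hle : ∑ s : Fin K → Bool, (Real.tanh (a + Z s) + Real.tanh (a - Z s))
        ≤ ∑ _s : Fin K → Bool, 2 * Real.tanh a :=
      Finset.sum_le_sum fun s _ => tanh_add_tanh_sub_le ha (Z s)
    have hcard : ∑ _s : Fin K → Bool, 2 * Real.tanh a = (2:ℝ)^K * (2 * Real.tanh a) := by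
      rw [Finset.sum_const, Finset.card_univ, nsmul_eq_mul]
      simp
    rw [hcard] at hle
    linarith
  constructor
  · apply mul_le_mul_of_nonneg_left ?_ hA
    rw [one_div, inv_mul_le_iff₀ (by positivity : (0:ℝ) < 2 ^ K)]
    exact hsum
  · calc A * Real.tanh a ≤ A * a := mul_le_mul_of_nonneg_left (tanh_le_self_of_nonneg ha) hA
      _ = A * B * x := by rw [ha_def, mul_assoc]
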